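/- Let 0 < α̲ ≤ ᾱ < 2, let α, β : ℝ → [α̲, ᾱ] be measurable, and let f : ℝ → ℂ be a Schwartz function. Then C_f := ∫_ℝ (|ξ|^{α̲} + |ξ|^{ᾱ}) · |log|ξ|| · ‖f̂(ξ)‖ dξ is finite, and for every x ∈ ℝ, ‖∫_ℝ e^{ixξ} (|ξ|^{α(x)} − |ξ|^{β(x)}) f̂(ξ) dξ‖ ≤ |α(x) − β(x)| · C_f. -/

import Mathlib

open MeasureTheory

/-- The one-dimensional Fourier transform with the convention
`f̂(ξ) = (2π)^{−1} ∫ e^{−ixξ} f(x) dx`. -/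
noncomputable def fourierHat1 (f : ℝ → ℂ) (ξ : ℝ) : ℂ :=
  (((2 * Real.pi)⁻¹ : ℝ) : ℂ) * ∫ x : ℝ, Complex.exp (-(((x * ξ : ℝ) : ℂ) * Complex.I)) * f x

open Real FourierTransform

lemma fourierHat1_eq (f : ℝ → ℂ) (ξ : ℝ) :
    fourierHat1 f ξ = (((2 * Real.pi)⁻¹ : ℝ) : ℂ) * 𝓕 f (ξ / (2 * Real.pi)) := by
  rw [fourierHat1, Real.fourier_eq']
  congr 1
  apply congrArg
  funext v
  have hπ : (2 * π) ≠ 0 := by positivity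
  have h1 : (-2 * π * (inner ℝ v (ξ / (2 * π)) : ℝ)) = -(v * ξ) := by
    simp only [RCLike.inner_apply, starRingEnd_apply, star_trivial]
    field_simp
  rw [h1, smul_eq_mul]
  push_cast
  ring_nf

lemma exp_sub_exp_le {u v : ℝ} (h : u ≤ v) :
    Real.exp v - Real.exp u ≤ (v - u) * Real.exp v := by
  have h1 : Real.exp u = Real.exp (u - v) * Real.exp v := by
    rw [← Real.exp_add]; ring_nf
  nlinarith [Real.add_one_le_exp (u - v), Real.exp_pos v]

lemma abs_exp_sub_exp_le (u v : ℝ) :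
    |Real.exp u - Real.exp v| ≤ |u - v| * max (Real.exp u) (Real.exp v) := by
  rcases le_total u v with h | h
  · rw [abs_sub_comm, abs_of_nonneg (by linarith [Real.exp_le_exp.2 h])]
    calc Real.exp v - Real.exp u ≤ (v - u) * Real.exp v := exp_sub_exp_le h
      _ ≤ |u - v| * max (Real.exp u) (Real.exp v) := by
          apply mul_le_mul (by rw [abs_sub_comm]; exact le_abs_self _) (le_max_right _ _)
            (Real.exp_pos v).le (abs_nonneg _)
  · rw [abs_of_nonneg (by linarith [Real.exp_le_exp.2 h])]
    calc Real.exp u - Real.exp v ≤ (u - v) * Real.exp u := exp_sub_exp_le h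
      _ ≤ |u - v| * max (Real.exp u) (Real.exp v) := by
          apply mul_le_mul (le_abs_self _) (le_max_left _ _) (Real.exp_pos u).le (abs_nonneg _)

lemma rpow_sub_rpow_le {αl αu : ℝ} (h0 : 0 < αl) {a b t : ℝ} (ht : 0 ≤ t)
    (ha : a ∈ Set.Icc αl αu) (hb : b ∈ Set.Icc αl αu) :
    |t ^ a - t ^ b| ≤ |a - b| * ((t ^ αl + t ^ αu) * |Real.log t|) := by
  rcases eq_or_lt_of_le ht with h | htpos
  · simp [← h, Real.zero_rpow (ne_of_gt (lt_of_lt_of_le h0 ha.1)),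
      Real.zero_rpow (ne_of_gt (lt_of_lt_of_le h0 hb.1))]
  · have hbound : ∀ c, c ∈ Set.Icc αl αu → t ^ c ≤ t ^ αl + t ^ αu := by
      intro c hc
      rcases le_total t 1 with h1 | h1
      · have h3 : t ^ c ≤ t ^ αl := Real.rpow_le_rpow_of_exponent_ge htpos h1 hc.1
        have h4 : 0 ≤ t ^ αu := Real.rpow_nonneg ht _
        linarith
      · have h3 : t ^ c ≤ t ^ αu := Real.rpow_le_rpow_of_exponent_le h1 hc.2
        have h4 : 0 ≤ t ^ αl := Real.rpow_nonneg ht _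
        linarith
    have hta : t ^ a = Real.exp (a * Real.log t) := by
      rw [Real.rpow_def_of_pos htpos]; ring_nf
    have htb : t ^ b = Real.exp (b * Real.log t) := by
      rw [Real.rpow_def_of_pos htpos]; ring_nf
    calc |t ^ a - t ^ b|
        ≤ |a * Real.log t - b * Real.log t| * max (t ^ a) (t ^ b) := by
          rw [hta, htb]; rw [← hta, ← htb]; rw [hta, htb]
          exact abs_exp_sub_exp_le _ _
      _ = |a - b| * |Real.log t| * max (t ^ a) (t ^ b) := by
          rw [← abs_mul]; ring_nf
      _ ≤ |a - b| * |Real.log t| * (t ^ αl + t ^ αu) := by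
          apply mul_le_mul_of_nonneg_left _ (by positivity)
          exact max_le (hbound a ha) (hbound b hb)
      _ = |a - b| * ((t ^ αl + t ^ αu) * |Real.log t|) := by ring

lemma weight_le {αl αu : ℝ} (h0 : 0 < αl) (hle : αl ≤ αu) (h2 : αu < 2) {t : ℝ} (ht : 0 ≤ t) :
    (t ^ αl + t ^ αu) * |Real.log t| ≤ 4 / αl + 2 * t ^ (3 : ℝ) := by
  have hαu : 0 < αu := lt_of_lt_of_le h0 hle
  rcases eq_or_lt_of_le ht with h | htpos
  · simp [← h, Real.zero_rpow (ne_of_gt h0), Real.zero_rpow (ne_of_gt hαu),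
      Real.zero_rpow (by norm_num : (3:ℝ) ≠ 0)]
    positivity
  rcases le_total t 1 with h1 | h1
  · have hlog : |Real.log t| = -Real.log t := abs_of_nonpos (Real.log_nonpos ht h1)
    have hkey : -Real.log t ≤ (2 / αl) * t ^ (-(αl / 2)) := by
      have h3 : Real.log (t⁻¹ ^ (αl / 2)) ≤ t⁻¹ ^ (αl / 2) - 1 :=
        Real.log_le_sub_one_of_pos (Real.rpow_pos_of_pos (inv_pos.2 htpos) _)
      rw [Real.log_rpow (inv_pos.2 htpos), Real.log_inv] at h3
      have h4 : t⁻¹ ^ (αl / 2) = t ^ (-(αl / 2)) := by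
        rw [Real.inv_rpow ht, ← Real.rpow_neg ht]
      rw [h4] at h3
      have h5 := Real.rpow_nonneg ht (-(αl/2))
      have hαl2 : 0 < αl / 2 := by linarith
      rw [div_mul_eq_mul_div, le_div_iff₀ h0]
      linarith
    have e1 : t ^ αl * t ^ (-(αl / 2)) ≤ 1 := by
      rw [← Real.rpow_add htpos]
      exact Real.rpow_le_one ht h1 (by linarith)
    have e2 : t ^ αu * t ^ (-(αl / 2)) ≤ 1 := by
      rw [← Real.rpow_add htpos]
      exact Real.rpow_le_one ht h1 (by linarith)
    have h3 : 0 ≤ t ^ (3:ℝ) := Real.rpow_nonneg ht _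
    calc (t ^ αl + t ^ αu) * |Real.log t|
        ≤ (t ^ αl + t ^ αu) * ((2 / αl) * t ^ (-(αl / 2))) := by
          rw [hlog]
          exact mul_le_mul_of_nonneg_left hkey (by positivity)
      _ = (2 / αl) * (t ^ αl * t ^ (-(αl / 2)) + t ^ αu * t ^ (-(αl / 2))) := by ring
      _ ≤ (2 / αl) * (1 + 1) := by
          apply mul_le_mul_of_nonneg_left (by linarith) (by positivity)
      _ ≤ 4 / αl + 2 * t ^ (3:ℝ) := by
          have : (2 / αl) * (1 + 1) = 4 / αl := by ring
          linarith
  · have hlog : |Real.log t| = Real.log t := abs_of_nonneg (Real.log_nonneg h1)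
    have hlt : Real.log t ≤ t := by
      have := Real.log_le_sub_one_of_pos htpos; linarith
    have hl2 : t ^ αl ≤ t ^ (2:ℝ) := Real.rpow_le_rpow_of_exponent_le h1 (by linarith)
    have hu2 : t ^ αu ≤ t ^ (2:ℝ) := Real.rpow_le_rpow_of_exponent_le h1 (by linarith)
    have h32 : t ^ (3:ℝ) = t ^ (2:ℝ) * t := by
      rw [show (3:ℝ) = 2 + 1 by norm_num, Real.rpow_add htpos, Real.rpow_one]
    have hlognn : 0 ≤ Real.log t := Real.log_nonneg h1
    have hαlnn : 0 ≤ 4 / αl := by positivity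
    calc (t ^ αl + t ^ αu) * |Real.log t|
        = (t ^ αl + t ^ αu) * Real.log t := by rw [hlog]
      _ ≤ (t ^ (2:ℝ) + t ^ (2:ℝ)) * t :=
          mul_le_mul (by linarith) hlt hlognn (by positivity)
      _ = 2 * t ^ (3:ℝ) := by rw [h32]; ring
      _ ≤ 4 / αl + 2 * t ^ (3:ℝ) := by linarith

/-- For `0 < α̲ ≤ ᾱ < 2`, measurable `α, β : ℝ → [α̲, ᾱ]` and a Schwartz
function `f : ℝ → ℂ`, the constant
`C_f = ∫ (|ξ|^{α̲} + |ξ|^{ᾱ})·|log|ξ||·‖f̂(ξ)‖ dξ` is finite, and for every `x`,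
`‖∫ e^{ixξ} (|ξ|^{α(x)} − |ξ|^{β(x)}) f̂(ξ) dξ‖ ≤ |α(x) − β(x)|·C_f`. -/
theorem stable_like_symbol_difference_bound (αl αu : ℝ) (h0 : 0 < αl) (hle : αl ≤ αu)
    (h2 : αu < 2) (α β : ℝ → ℝ) (hα : Measurable α) (hβ : Measurable β)
    (hα_mem : ∀ x, α x ∈ Set.Icc αl αu) (hβ_mem : ∀ x, β x ∈ Set.Icc αl αu)
    (f : SchwartzMap ℝ ℂ) :
    Integrable (fun ξ : ℝ =>
      (|ξ| ^ αl + |ξ| ^ αu) * |Real.log (|ξ|)| * ‖fourierHat1 (⇑f) ξ‖) ∧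
    ∀ x : ℝ,
      ‖∫ ξ : ℝ, Complex.exp (((x * ξ : ℝ) : ℂ) * Complex.I) *
          (((|ξ| ^ α x - |ξ| ^ β x : ℝ)) : ℂ) * fourierHat1 (⇑f) ξ‖ ≤
        |α x - β x| *
          ∫ ξ : ℝ, (|ξ| ^ αl + |ξ| ^ αu) * |Real.log (|ξ|)| * ‖fourierHat1 (⇑f) ξ‖ := by
  have h2π : (2 * π) ≠ 0 := by positivity
  set G : SchwartzMap ℝ ℂ := SchwartzMap.fourierTransformCLM ℂ f with hG
  have hFG : ∀ ξ : ℝ, fourierHat1 (⇑f) ξ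
      = (((2 * π)⁻¹ : ℝ) : ℂ) * G (ξ / (2 * π)) := by
    intro ξ
    rw [fourierHat1_eq]
    congr 1
  have hnorm : ∀ ξ : ℝ, ‖fourierHat1 (⇑f) ξ‖ = (2 * π)⁻¹ * ‖G (ξ / (2 * π))‖ := by
    intro ξ
    rw [hFG, norm_mul, Complex.norm_real, Real.norm_eq_abs,
      abs_of_pos (by positivity : (0:ℝ) < (2 * π)⁻¹)]
  -- continuity of the Fourier transform
  have hFcont : Continuous (fun ξ : ℝ => fourierHat1 (⇑f) ξ) := by
    have : Continuous (fun ξ : ℝ => (((2 * π)⁻¹ : ℝ) : ℂ) * G (ξ / (2 * π))) :=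
      continuous_const.mul (G.continuous.comp (continuous_id.div_const _))
    exact this.congr (fun ξ => (hFG ξ).symm)
  -- integrability of ‖F‖ and ‖ξ‖^3‖F‖
  have hI0 : Integrable (fun ξ : ℝ => ‖fourierHat1 (⇑f) ξ‖) := by
    have h1 : Integrable (fun u : ℝ => ‖G u‖) := G.integrable.norm
    have h2' : Integrable (fun ξ : ℝ => (2 * π)⁻¹ * ‖G (ξ / (2 * π))‖) :=
      (h1.comp_div h2π).const_mul _
    exact h2'.congr (Filter.Eventually.of_forall fun ξ => (hnorm ξ).symm)
  have hI3 : Integrable (fun ξ : ℝ => |ξ| ^ (3:ℝ) * ‖fourierHat1 (⇑f) ξ‖) := by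
    have h1 : Integrable (fun u : ℝ => ‖u‖ ^ (3:ℕ) * ‖G u‖) := G.integrable_pow_mul volume 3
    have h2' : Integrable (fun ξ : ℝ =>
        ((2 * π) ^ (3:ℕ) * (2 * π)⁻¹) * (‖ξ / (2 * π)‖ ^ (3:ℕ) * ‖G (ξ / (2 * π))‖)) :=
      (h1.comp_div h2π).const_mul _
    apply h2'.congr (Filter.Eventually.of_forall fun ξ => ?_)
    have hπpos : (0:ℝ) < 2 * π := by positivity
    have : ‖ξ / (2 * π)‖ ^ (3:ℕ) = |ξ| ^ (3:ℕ) / (2 * π) ^ (3:ℕ) := by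
      rw [Real.norm_eq_abs, abs_div, abs_of_pos hπpos, div_pow]
    dsimp only
    rw [this, hnorm]
    rw [← Real.rpow_natCast |ξ| 3]
    push_cast
    field_simp
  -- the weight integrand
  set w : ℝ → ℝ := fun ξ => (|ξ| ^ αl + |ξ| ^ αu) * |Real.log (|ξ|)| * ‖fourierHat1 (⇑f) ξ‖
    with hw
  have hwnn : ∀ ξ, 0 ≤ w ξ := by
    intro ξ; exact mul_nonneg (mul_nonneg (by positivity) (abs_nonneg _)) (norm_nonneg _)
  have hwle : ∀ ξ, w ξ ≤ (4 / αl) * ‖fourierHat1 (⇑f) ξ‖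
      + 2 * (|ξ| ^ (3:ℝ) * ‖fourierHat1 (⇑f) ξ‖) := by
    intro ξ
    have := weight_le h0 hle h2 (abs_nonneg ξ)
    have h' := mul_le_mul_of_nonneg_right this (norm_nonneg (fourierHat1 (⇑f) ξ))
    calc w ξ ≤ (4 / αl + 2 * |ξ| ^ (3:ℝ)) * ‖fourierHat1 (⇑f) ξ‖ := h'
      _ = (4 / αl) * ‖fourierHat1 (⇑f) ξ‖ + 2 * (|ξ| ^ (3:ℝ) * ‖fourierHat1 (⇑f) ξ‖) := by ring
  have hwmeas : AEStronglyMeasurable w volume := by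
    apply Measurable.aestronglyMeasurable
    refine Measurable.mul (Measurable.mul ?_ ?_) hFcont.norm.measurable
    · exact ((continuous_abs.rpow_const fun _ => Or.inr h0.le).measurable).add
        ((continuous_abs.rpow_const fun _ => Or.inr (h0.trans_le hle).le).measurable)
    · exact (Real.measurable_log.comp measurable_abs).abs
  have hwInt : Integrable w := by
    apply Integrable.mono' ((hI0.const_mul (4 / αl)).add (hI3.const_mul 2)) hwmeas
    refine Filter.Eventually.of_forall fun ξ => ?_
    rw [Real.norm_eq_abs, abs_of_nonneg (hwnn ξ)]
    exact hwle ξ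
  refine ⟨hwInt, fun x => ?_⟩
  -- the pointwise bound
  have hpt : ∀ ξ : ℝ,
      ‖Complex.exp (((x * ξ : ℝ) : ℂ) * Complex.I) *
          (((|ξ| ^ α x - |ξ| ^ β x : ℝ)) : ℂ) * fourierHat1 (⇑f) ξ‖ ≤ |α x - β x| * w ξ := by
    intro ξ
    rw [norm_mul, norm_mul, 
      Complex.norm_exp_ofReal_mul_I, one_mul, Complex.norm_real, Real.norm_eq_abs]
    have h1 : |(|ξ| ^ α x - |ξ| ^ β x)| ≤ |α x - β x| *
        ((|ξ| ^ αl + |ξ| ^ αu) * |Real.log (|ξ|)|) :=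
      rpow_sub_rpow_le h0 (abs_nonneg ξ) (hα_mem x) (hβ_mem x)
    calc |(|ξ| ^ α x - |ξ| ^ β x)| * ‖fourierHat1 (⇑f) ξ‖
        ≤ (|α x - β x| * ((|ξ| ^ αl + |ξ| ^ αu) * |Real.log (|ξ|)|)) * ‖fourierHat1 (⇑f) ξ‖ :=
          mul_le_mul_of_nonneg_right h1 (norm_nonneg _)
      _ = |α x - β x| * w ξ := by rw [hw]; ring
  calc ‖∫ ξ : ℝ, Complex.exp (((x * ξ : ℝ) : ℂ) * Complex.I) *
          (((|ξ| ^ α x - |ξ| ^ β x : ℝ)) : ℂ) * fourierHat1 (⇑f) ξ‖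
      ≤ ∫ ξ : ℝ, |α x - β x| * w ξ :=
        norm_integral_le_of_norm_le (hwInt.const_mul _) (Filter.Eventually.of_forall hpt)
    _ = |α x - β x| * ∫ ξ : ℝ, w ξ := integral_const_mul _ _
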